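/- arXiv:1204.5062 — 2 statements merged into one kernel-verified Lean document; each statement's English description precedes it below -/
import Mathlib

section
/- Let Φ be a frame for 𝕂^n with m vectors and singular values σ_1 ≥ ⋯ ≥ σ_n > 0. Let r ≤ m−n, let I ⊂ {1,…,n} with |I| = r, and let (q_i)_{i∈I} be reals satisfying q_i ≥ 1/σ_i for all i ∈ I. Then there exists a dual frame Ψ of Φ whose multiset of singular values contains {q_i : i ∈ I}; in fact there is a dual frame Ψ whose multiset of singular values equals {q_i : i ∈ I} ∪ {1/σ_i : i ∉ I}. -/
open Matrix Polynomial

/-- `σ : Fin n → ℝ` is the non-increasingly ordered sequence of singular values of the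
`n × m` matrix `Φ`: the `σ i` are positive, non-increasing, and their squares are the
eigenvalues (with multiplicity) of `Φ Φ*`, encoded via the characteristic polynomial. -/
def HasSingularValues {𝕂 : Type} [RCLike 𝕂] {n m : ℕ}
    (Φ : Matrix (Fin n) (Fin m) 𝕂) (σ : Fin n → ℝ) : Prop :=
  Antitone σ ∧ (∀ i, 0 < σ i) ∧
    (Φ * Φᴴ).charpoly = ∏ i : Fin n, (X - C ((σ i : 𝕂) ^ 2))

private lemma charpoly_unitary_conj' {𝕂 : Type} [RCLike 𝕂] {n : ℕ}
    (U M : Matrix (Fin n) (Fin n) 𝕂) (hU : U * Uᴴ = 1) (hU' : Uᴴ * U = 1) :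
    (U * M * Uᴴ).charpoly = M.charpoly := by
  unfold Matrix.charpoly
  have hcomm : ∀ N : Matrix (Fin n) (Fin n) 𝕂[X],
      N * Matrix.scalar (Fin n) (X : 𝕂[X]) = Matrix.scalar (Fin n) (X : 𝕂[X]) * N :=
    fun N => (scalar_commute (X : 𝕂[X]) (fun r' => Commute.all _ _) N).symm
  have key : charmatrix (U * M * Uᴴ) =
      (U.map C) * charmatrix M * (Uᴴ.map C) := by
    rw [charmatrix, charmatrix, mul_sub, sub_mul]
    congr 1
    · rw [hcomm, mul_assoc, ← Matrix.map_mul, hU]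
      simp
    · simp only [RingHom.mapMatrix_apply]
      rw [← Matrix.map_mul, ← Matrix.map_mul]
  rw [key, det_mul, det_mul, mul_comm, ← mul_assoc, ← det_mul, ← Matrix.map_mul, hU']
  simp

private lemma charpoly_diagonal' {𝕂 : Type} [RCLike 𝕂] {n : ℕ} (d : Fin n → 𝕂) :
    (diagonal d).charpoly = ∏ i : Fin n, (X - C (d i)) := by
  rw [charpoly_of_upperTriangular _ (blockTriangular_diagonal d)]
  simp

private lemma exists_perm_of_map_eq' {k : ℕ} {α : Type*} [LinearOrder α] (f g : Fin k → α)
    (h : Multiset.map f Finset.univ.val = Multiset.map g Finset.univ.val) :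
    ∃ e : Equiv.Perm (Fin k), ∀ i, f (e i) = g i := by
  have hof : ∀ (f : Fin k → α), Multiset.map f Finset.univ.val = (List.ofFn f : Multiset α) := by
    intro f
    rw [List.ofFn_eq_map, Fin.univ_def]
    rfl
  rw [hof, hof] at h
  have hperm : (List.ofFn f).Perm (List.ofFn g) := Quotient.exact h
  have h1 : (List.ofFn (f ∘ Tuple.sort f)).Perm (List.ofFn (g ∘ Tuple.sort g)) := by
    refine ((Tuple.sort f).ofFn_comp_perm f).trans (hperm.trans ?_)
    exact ((Tuple.sort g).ofFn_comp_perm g).symm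
  have heq : f ∘ Tuple.sort f = g ∘ Tuple.sort g := by
    apply List.ofFn_injective
    exact h1.eq_of_sortedLE (Tuple.monotone_sort f).sortedLE_ofFn
      (Tuple.monotone_sort g).sortedLE_ofFn
  refine ⟨(Tuple.sort g).symm.trans (Tuple.sort f), fun i => ?_⟩
  have := congrFun heq ((Tuple.sort g).symm i)
  simpa using this

set_option maxHeartbeats 1000000 in
/-- Let `Φ` be a frame for `𝕂^n` with `m` vectors and singular values
`σ_1 ≥ ⋯ ≥ σ_n > 0`. For `r ≤ m − n`, an index set `I ⊆ {1,…,n}` with `|I| = r`, and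
reals `q_i ≥ 1/σ_i` (`i ∈ I`), there is a dual frame `Ψ` of `Φ` whose multiset of
singular values is exactly `{q_i : i ∈ I} ∪ {1/σ_i : i ∉ I}` (encoded by the
characteristic polynomial of `Ψ Ψ*`); in particular it contains `{q_i : i ∈ I}`. -/
theorem exists_dual_with_prescribed_partial_spectrum {𝕂 : Type} [RCLike 𝕂] {n m : ℕ}
    (hnm : n ≤ m)
    (Φ : Matrix (Fin n) (Fin m) 𝕂) (hΦ : Φ.rank = n)
    (σ : Fin n → ℝ) (hσ : HasSingularValues Φ σ)
    (r : ℕ) (hr : r ≤ m - n)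
    (I : Finset (Fin n)) (hI : I.card = r)
    (q : Fin n → ℝ) (hq : ∀ i ∈ I, 1 / σ i ≤ q i) :
    ∃ Ψ : Matrix (Fin n) (Fin m) 𝕂, Ψ * Φᴴ = 1 ∧
      (Ψ * Ψᴴ).charpoly =
        (∏ i ∈ I, (X - C ((q i : 𝕂) ^ 2))) *
        ∏ i ∈ Iᶜ, (X - C (((σ i)⁻¹ : 𝕂) ^ 2)) := by
  classical
  obtain ⟨-, hσpos, hc⟩ := hσ
  set A := Φ * Φᴴ with hAdef
  have hA : A.IsHermitian := isHermitian_mul_conjTranspose_self Φ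
  set U : Matrix (Fin n) (Fin n) 𝕂 := (hA.eigenvectorUnitary : Matrix (Fin n) (Fin n) 𝕂)
    with hUdef
  have hU1 : U * Uᴴ = 1 := by
    simpa [hUdef, Matrix.star_eq_conjTranspose] using
      (Matrix.mem_unitaryGroup_iff).mp hA.eigenvectorUnitary.2
  have hU2 : Uᴴ * U = 1 := by
    simpa [hUdef, Matrix.star_eq_conjTranspose] using
      (Matrix.mem_unitaryGroup_iff').mp hA.eigenvectorUnitary.2
  have hspec : A = U * diagonal (fun k => ((hA.eigenvalues k : ℝ) : 𝕂)) * Uᴴ :=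
    hA.spectral_theorem
  -- a permutation matching eigenvalues with σ²
  have hcp : A.charpoly = ∏ i : Fin n, (X - C ((hA.eigenvalues i : 𝕂))) := by
    conv_lhs => rw [hspec]
    rw [charpoly_unitary_conj' _ _ hU1 hU2, charpoly_diagonal']
  have h1 : ∏ i : Fin n, (X - C ((hA.eigenvalues i : 𝕂)))
      = ∏ i : Fin n, (X - C (((σ i ^ 2 : ℝ) : 𝕂))) := by
    rw [← hcp, hc]
    push_cast
    rfl
  have h2 : Multiset.map (fun i => ((hA.eigenvalues i : ℝ) : 𝕂)) Finset.univ.val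
      = Multiset.map (fun i => ((σ i ^ 2 : ℝ) : 𝕂)) Finset.univ.val := by
    have hroots := congrArg Polynomial.roots h1
    have e1 : Multiset.map (fun i => X - C ((hA.eigenvalues i : 𝕂))) Finset.univ.val
        = Multiset.map (fun a : 𝕂 => X - C a)
          (Multiset.map (fun i => ((hA.eigenvalues i : ℝ) : 𝕂)) Finset.univ.val) := by
      rw [Multiset.map_map]; rfl
    have e2 : Multiset.map (fun i => X - C (((σ i ^ 2 : ℝ) : 𝕂))) Finset.univ.val
        = Multiset.map (fun a : 𝕂 => X - C a)
          (Multiset.map (fun i => ((σ i ^ 2 : ℝ) : 𝕂)) Finset.univ.val) := by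
      rw [Multiset.map_map]; rfl
    rwa [Finset.prod_eq_multiset_prod, Finset.prod_eq_multiset_prod, e1, e2,
      Polynomial.roots_multiset_prod_X_sub_C, Polynomial.roots_multiset_prod_X_sub_C] at hroots
  have h3 : Multiset.map hA.eigenvalues Finset.univ.val
      = Multiset.map (fun i => σ i ^ 2) Finset.univ.val := by
    apply Multiset.map_injective (RCLike.ofReal_injective (K := 𝕂))
    rw [Multiset.map_map, Multiset.map_map]
    exact h2
  obtain ⟨e, he⟩ := exists_perm_of_map_eq' _ _ h3
  have heig : ∀ k, hA.eigenvalues k = σ (e.symm k) ^ 2 := by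
    intro k
    have := he (e.symm k)
    rwa [Equiv.apply_symm_apply] at this
  have heigpos : ∀ k, 0 < hA.eigenvalues k := by
    intro k
    rw [heig k]
    exact pow_pos (hσpos _) 2
  -- the inverse of A
  set Dinv : Matrix (Fin n) (Fin n) 𝕂 :=
    diagonal (fun k => (((hA.eigenvalues k)⁻¹ : ℝ) : 𝕂)) with hDinvdef
  have hDD : diagonal (fun k => ((hA.eigenvalues k : ℝ) : 𝕂)) * Dinv = 1 := by
    rw [hDinvdef, diagonal_mul_diagonal, ← diagonal_one]
    refine congrArg diagonal (funext fun k => ?_)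
    rw [← RCLike.ofReal_mul, mul_inv_cancel₀ (heigpos k).ne']
    simp
  have hdet : IsUnit A.det := by
    rw [hA.det_eq_prod_eigenvalues]
    refine isUnit_iff_ne_zero.mpr (Finset.prod_ne_zero_iff.mpr fun k _ => ?_)
    simpa using (heigpos k).ne'

  have hAinv : A⁻¹ = U * Dinv * Uᴴ := by
    apply Matrix.inv_eq_right_inv
    conv_lhs => rw [hspec]
    rw [Matrix.mul_assoc (U * diagonal (fun k => ((hA.eigenvalues k : ℝ) : 𝕂))) Uᴴ (U * Dinv * Uᴴ)]
    rw [← Matrix.mul_assoc Uᴴ (U * Dinv) Uᴴ, ← Matrix.mul_assoc Uᴴ U Dinv, hU2, Matrix.one_mul]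
    rw [← Matrix.mul_assoc (U * diagonal (fun k => ((hA.eigenvalues k : ℝ) : 𝕂))) Dinv Uᴴ]
    rw [Matrix.mul_assoc U (diagonal (fun k => ((hA.eigenvalues k : ℝ) : 𝕂))) Dinv, hDD,
      Matrix.mul_one, hU1]
  -- orthonormal vectors in the kernel of Φ
  set L : EuclideanSpace 𝕂 (Fin m) →ₗ[𝕂] (Fin n → 𝕂) :=
    Φ.mulVecLin ∘ₗ (WithLp.linearEquiv 2 𝕂 (Fin m → 𝕂)).toLinearMap with hL
  have hrange : LinearMap.range L = LinearMap.range Φ.mulVecLin := by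
    rw [hL, LinearMap.range_comp, LinearEquiv.range, Submodule.map_top]
  have hdim : Module.finrank 𝕂 (LinearMap.ker L) = m - n := by
    have hrn := LinearMap.finrank_range_add_finrank_ker L
    rw [hrange] at hrn
    have h2' : Module.finrank 𝕂 (LinearMap.range Φ.mulVecLin) = n := hΦ
    have h3' : Module.finrank 𝕂 (EuclideanSpace 𝕂 (Fin m)) = m := by
      simp [finrank_euclideanSpace]
    rw [h2', h3'] at hrn
    omega
  set b := stdOrthonormalBasis 𝕂 (LinearMap.ker L) with hb
  set w : Fin (m - n) → (Fin m → 𝕂) :=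
    fun j => (WithLp.equiv 2 _) ((b (Fin.cast hdim.symm j)) : EuclideanSpace 𝕂 (Fin m)) with hw
  have hworth : ∀ j j', ∑ x, (starRingEnd 𝕂) (w j x) * w j' x = if j = j' then 1 else 0 := by
    intro j j'
    have horth : Orthonormal 𝕂 (fun j : Fin (m - n) =>
        ((b (Fin.cast hdim.symm j)) : EuclideanSpace 𝕂 (Fin m))) := by
      have h1' : Orthonormal 𝕂 (fun i => ((b i : EuclideanSpace 𝕂 (Fin m)))) :=
        b.orthonormal.comp_linearIsometry (LinearMap.ker L).subtypeₗᵢ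
      exact h1'.comp _ (fun a a' h => by simpa using congrArg (Fin.cast hdim) h)
    have := orthonormal_iff_ite.mp horth j j'
    simpa [PiLp.inner_apply, RCLike.inner_apply, hw, mul_comm] using this
  have hwker : ∀ j, Φ.mulVec (w j) = 0 := by
    intro j
    exact (b (Fin.cast hdim.symm j)).2
  -- embedding of I into the kernel index set
  have hcard : Fintype.card {i // i ∈ I} ≤ Fintype.card (Fin (m - n)) := by
    simp only [Fintype.card_coe, Fintype.card_fin, hI]
    exact hr
  obtain ⟨ι⟩ := Function.Embedding.nonempty_iff_card_le.mpr hcard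
  -- the perturbation
  set c : Fin n → ℝ := fun i => Real.sqrt (q i ^ 2 - ((σ i)⁻¹) ^ 2) with hcdef
  have hrad : ∀ i ∈ I, 0 ≤ q i ^ 2 - ((σ i)⁻¹) ^ 2 := by
    intro i hi
    have h0 : (0 : ℝ) ≤ (σ i)⁻¹ := inv_nonneg.mpr (hσpos i).le
    have hle : (σ i)⁻¹ ≤ q i := by
      have := hq i hi
      rwa [one_div] at this
    nlinarith
  set N : Matrix (Fin n) (Fin m) 𝕂 := Matrix.of fun k j =>
    if h : e.symm k ∈ I then (c (e.symm k) : 𝕂) * (starRingEnd 𝕂) (w (ι ⟨e.symm k, h⟩) j)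
    else 0 with hNdef
  have hNΦ : N * Φᴴ = 0 := by
    ext k l
    rw [Matrix.mul_apply]
    simp only [hNdef, Matrix.of_apply, conjTranspose_apply, Matrix.zero_apply]
    by_cases h : e.symm k ∈ I
    · simp only [dif_pos h]
      have h0 := congrFun (hwker (ι ⟨e.symm k, h⟩)) l
      simp only [Matrix.mulVec, dotProduct, Pi.zero_apply] at h0
      calc ∑ j, (c (e.symm k) : 𝕂) * (starRingEnd 𝕂) (w (ι ⟨e.symm k, h⟩) j)
            * (starRingEnd 𝕂) (Φ l j)
          = (c (e.symm k) : 𝕂) * (starRingEnd 𝕂) (∑ j, Φ l j * w (ι ⟨e.symm k, h⟩) j) := by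
            rw [map_sum, Finset.mul_sum]
            refine Finset.sum_congr rfl fun j _ => ?_
            rw [_root_.map_mul]
            ring
        _ = 0 := by rw [h0, map_zero, mul_zero]
    · simp [dif_neg h]
  set d : Fin n → ℝ := fun k => if e.symm k ∈ I then c (e.symm k) ^ 2 else 0 with hddef
  have hNN : N * Nᴴ = diagonal (fun k => ((d k : ℝ) : 𝕂)) := by
    ext k l
    rw [Matrix.mul_apply]
    simp only [hNdef, Matrix.of_apply, conjTranspose_apply, RCLike.star_def]
    by_cases hk : e.symm k ∈ I
    · by_cases hl : e.symm l ∈ I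
      · simp only [dif_pos hk, dif_pos hl]
        have hsum : ∑ j, (c (e.symm k) : 𝕂) * (starRingEnd 𝕂) (w (ι ⟨e.symm k, hk⟩) j)
            * (starRingEnd 𝕂) ((c (e.symm l) : 𝕂) * (starRingEnd 𝕂) (w (ι ⟨e.symm l, hl⟩) j))
            = (c (e.symm k) : 𝕂) * (c (e.symm l) : 𝕂)
              * ∑ j, (starRingEnd 𝕂) (w (ι ⟨e.symm k, hk⟩) j) * w (ι ⟨e.symm l, hl⟩) j := by
          rw [Finset.mul_sum]
          refine Finset.sum_congr rfl fun j _ => ?_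
          rw [_root_.map_mul, RCLike.conj_ofReal, RingHomCompTriple.comp_apply, RingHom.id_apply]
          ring
        rw [hsum, hworth]
        by_cases hkl : k = l
        · subst hkl
          rw [if_pos rfl, diagonal_apply_eq, mul_one]
          simp only [hddef, if_pos hk]
          push_cast
          ring
        · have hne : ι ⟨e.symm k, hk⟩ ≠ ι ⟨e.symm l, hl⟩ := fun hcon =>
            hkl (e.symm.injective (Subtype.ext_iff.mp (ι.injective hcon)))
          rw [if_neg hne, diagonal_apply_ne _ hkl, mul_zero]
      · simp only [dif_pos hk, dif_neg hl]
        have hkl : k ≠ l := fun hcon => hl (hcon ▸ hk)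
        rw [diagonal_apply_ne _ hkl]
        simp only [map_zero, mul_zero, Finset.sum_const_zero]
    · simp only [dif_neg hk]
      by_cases hkl : k = l
      · subst hkl
        rw [diagonal_apply_eq]
        simp only [zero_mul, Finset.sum_const_zero, hddef, if_neg hk, RCLike.ofReal_zero]
      · rw [diagonal_apply_ne _ hkl]
        simp only [zero_mul, Finset.sum_const_zero]
  set g : Fin n → ℝ := fun k => (hA.eigenvalues k)⁻¹ + d k with hgdef
  -- the dual frame
  refine ⟨A⁻¹ * Φ + U * N, ?_, ?_⟩
  · rw [Matrix.add_mul, Matrix.mul_assoc, ← hAdef, Matrix.nonsing_inv_mul A hdet,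
      Matrix.mul_assoc, hNΦ, Matrix.mul_zero, add_zero]
  · have hinvH : A⁻¹ᴴ = A⁻¹ := by rw [Matrix.conjTranspose_nonsing_inv, hA.eq]
    have hΦN : Φ * Nᴴ = 0 := by
      have := congrArg conjTranspose hNΦ
      rwa [conjTranspose_mul, conjTranspose_conjTranspose, conjTranspose_zero] at this
    have hΨH : (A⁻¹ * Φ + U * N)ᴴ = Φᴴ * A⁻¹ + Nᴴ * Uᴴ := by
      rw [conjTranspose_add, conjTranspose_mul, conjTranspose_mul, hinvH]
    have t1 : A⁻¹ * Φ * (Φᴴ * A⁻¹) = A⁻¹ := by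
      rw [← Matrix.mul_assoc (A⁻¹ * Φ) Φᴴ A⁻¹, Matrix.mul_assoc A⁻¹ Φ Φᴴ, ← hAdef,
        Matrix.nonsing_inv_mul A hdet, Matrix.one_mul]
    have t2 : A⁻¹ * Φ * (Nᴴ * Uᴴ) = 0 := by
      rw [← Matrix.mul_assoc (A⁻¹ * Φ) Nᴴ Uᴴ, Matrix.mul_assoc A⁻¹ Φ Nᴴ, hΦN,
        Matrix.mul_zero, Matrix.zero_mul]
    have t3 : U * N * (Φᴴ * A⁻¹) = 0 := by
      rw [← Matrix.mul_assoc (U * N) Φᴴ A⁻¹, Matrix.mul_assoc U N Φᴴ, hNΦ,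
        Matrix.mul_zero, Matrix.zero_mul]
    have t4 : U * N * (Nᴴ * Uᴴ) = U * diagonal (fun k => ((d k : ℝ) : 𝕂)) * Uᴴ := by
      rw [← Matrix.mul_assoc (U * N) Nᴴ Uᴴ, Matrix.mul_assoc U N Nᴴ, hNN]
    have hDg : Dinv + diagonal (fun k => ((d k : ℝ) : 𝕂))
        = diagonal (fun k => ((g k : ℝ) : 𝕂)) := by
      rw [hDinvdef, diagonal_add]
      refine congrArg diagonal (funext fun k => ?_)
      rw [hgdef]
      push_cast
      ring
    have hexp : (A⁻¹ * Φ + U * N) * (A⁻¹ * Φ + U * N)ᴴ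
        = U * diagonal (fun k => ((g k : ℝ) : 𝕂)) * Uᴴ := by
      rw [hΨH, Matrix.add_mul, Matrix.mul_add, Matrix.mul_add, t1, t2, t3, t4, add_zero,
        zero_add, hAinv, ← Matrix.add_mul, ← Matrix.mul_add, hDg]
    rw [hexp, charpoly_unitary_conj' _ _ hU1 hU2, charpoly_diagonal']
    have hre := Equiv.prod_comp e (fun k => (X - C ((g k : ℝ) : 𝕂)))
    rw [← hre, ← Finset.prod_mul_prod_compl I
      (fun i => (X - C ((g (e i) : ℝ) : 𝕂)))]
    have hgI : ∀ i ∈ I, g (e i) = q i ^ 2 := by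
      intro i hi
      rw [hgdef]
      simp only [hddef, he i, Equiv.symm_apply_apply, if_pos hi, hcdef]
      rw [Real.sq_sqrt (hrad i hi), ← inv_pow]
      ring
    have hgIc : ∀ i ∈ Iᶜ, g (e i) = ((σ i)⁻¹) ^ 2 := by
      intro i hi
      rw [hgdef]
      simp only [hddef, he i, Equiv.symm_apply_apply,
        if_neg (Finset.mem_compl.mp hi), ← inv_pow, add_zero]
    congr 1
    · refine Finset.prod_congr rfl fun i hi => ?_
      rw [hgI i hi]
      push_cast
      ring_nf
    · refine Finset.prod_congr rfl fun i hi => ?_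
      rw [hgIc i hi]
      push_cast
      ring_nf
end

section
/- Let Φ be a frame for 𝕂^n with m vectors, set r = m−n, and let σ_1 ≥ ⋯ ≥ σ_n > 0 be the singular values of Φ. Then for every dual frame Ψ of Φ with singular values σ^Ψ_1 ≥ ⋯ ≥ σ^Ψ_n arranged in non-increasing order, the following interlacing inequalities hold: σ^Ψ_i ≥ 1/σ_{n−i+1} for i = 1,…,r, and 1/σ_{n−i+1} ≤ σ^Ψ_i ≤ 1/σ_{n−i+r+1} for i = r+1,…,n. -/
open Matrix Polynomial

variable {𝕂 : Type} [RCLike 𝕂] {n : ℕ}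

/-- charpoly is invariant under conjugation. -/
lemma charpoly_conj_inv {U V A : Matrix (Fin n) (Fin n) 𝕂} (hUV : U * V = 1) (hVU : V * U = 1) :
    (U * A * V).charpoly = A.charpoly := by
  have hmap : (RingHom.mapMatrix (C : 𝕂 →+* 𝕂[X])) (U * A * V)
      = (RingHom.mapMatrix (C : 𝕂 →+* 𝕂[X])) U * (RingHom.mapMatrix (C : 𝕂 →+* 𝕂[X])) A
        * (RingHom.mapMatrix (C : 𝕂 →+* 𝕂[X])) V := by
    rw [_root_.map_mul, _root_.map_mul]
  have huv : (RingHom.mapMatrix (C : 𝕂 →+* 𝕂[X])) U * (RingHom.mapMatrix (C : 𝕂 →+* 𝕂[X])) V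
      = 1 := by rw [← _root_.map_mul, hUV, _root_.map_one]
  have hc : charmatrix (U * A * V)
      = (RingHom.mapMatrix (C : 𝕂 →+* 𝕂[X])) U * charmatrix A
        * (RingHom.mapMatrix (C : 𝕂 →+* 𝕂[X])) V := by
    unfold charmatrix
    rw [mul_sub, sub_mul, hmap]
    congr 1
    calc (scalar (Fin n)) (X : 𝕂[X])
        = ((RingHom.mapMatrix (C : 𝕂 →+* 𝕂[X])) U * (RingHom.mapMatrix (C : 𝕂 →+* 𝕂[X])) V)
            * (scalar (Fin n)) (X : 𝕂[X]) := by rw [huv, one_mul]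
      _ = _ := by
          rw [mul_assoc, mul_assoc]
          congr 1
          exact ((scalar_commute (X : 𝕂[X]) (fun r' => Commute.all _ _) _).symm).eq
  have hdet : ((RingHom.mapMatrix (C : 𝕂 →+* 𝕂[X])) U).det
      * ((RingHom.mapMatrix (C : 𝕂 →+* 𝕂[X])) V).det = 1 := by
    rw [← det_mul, huv, det_one]
  rw [Matrix.charpoly, hc, det_mul, det_mul, Matrix.charpoly]
  linear_combination (charmatrix A).det * hdet

lemma charpoly_diagonal_real (d : Fin n → ℝ) :
    (Matrix.diagonal (fun i => (d i : 𝕂))).charpoly = ∏ i : Fin n, (X - C ((d i : 𝕂))) := by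
  rw [Matrix.charpoly_of_upperTriangular _ (Matrix.blockTriangular_diagonal _)]
  simp

/-- The characteristic polynomial of a Hermitian matrix splits into its eigenvalues. -/
lemma charpoly_eq_prod_eigenvalues {M : Matrix (Fin n) (Fin n) 𝕂} (hM : M.IsHermitian) :
    M.charpoly = ∏ i : Fin n, (X - C ((hM.eigenvalues i : 𝕂))) := by
  have hU := hM.spectral_theorem
  set U := (hM.eigenvectorUnitary : Matrix (Fin n) (Fin n) 𝕂) with hUdef
  have h1 : U * star U = 1 := (Matrix.mem_unitaryGroup_iff).mp hM.eigenvectorUnitary.2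
  have h2 : star U * U = 1 := (Matrix.mem_unitaryGroup_iff').mp hM.eigenvectorUnitary.2
  calc M.charpoly = (U * Matrix.diagonal (RCLike.ofReal ∘ hM.eigenvalues) * star U).charpoly := by
        exact (congrArg Matrix.charpoly hU).trans rfl
    _ = (Matrix.diagonal (RCLike.ofReal ∘ hM.eigenvalues)).charpoly := charpoly_conj_inv h1 h2
    _ = _ := charpoly_diagonal_real _

lemma prod_X_sub_C_inj {f g : Fin n → ℝ}
    (h : (∏ i : Fin n, (X - C ((f i : 𝕂)))) = ∏ i : Fin n, (X - C ((g i : 𝕂)))) :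
    Finset.univ.val.map f = Finset.univ.val.map g := by
  have hf : ∀ (u : Fin n → ℝ), (∏ i : Fin n, (X - C ((u i : 𝕂))))
      = ((Finset.univ.val.map (fun i : Fin n => ((u i : 𝕂)))).map (fun a => X - C a)).prod := by
    intro u
    rw [Multiset.map_map]
    rfl
  rw [hf, hf] at h
  have h2 := congrArg Polynomial.roots h
  rw [Polynomial.roots_multiset_prod_X_sub_C, Polynomial.roots_multiset_prod_X_sub_C] at h2
  have h3 : (Finset.univ.val.map f).map (fun x : ℝ => (x : 𝕂))
      = (Finset.univ.val.map g).map (fun x : ℝ => (x : 𝕂)) := by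
    rw [Multiset.map_map, Multiset.map_map]
    exact h2
  exact Multiset.map_injective (fun a b hab => by exact_mod_cast hab) h3

lemma ms_eq_of_charpoly {M : Matrix (Fin n) (Fin n) 𝕂} (hM : M.IsHermitian) {μ : Fin n → ℝ}
    (h : M.charpoly = ∏ i : Fin n, (X - C ((μ i : 𝕂)))) :
    Finset.univ.val.map μ = Finset.univ.val.map hM.eigenvalues :=
  prod_X_sub_C_inj (𝕂 := 𝕂) (h.symm.trans (charpoly_eq_prod_eigenvalues hM))

lemma prod_of_ms_eq {f g : Fin n → ℝ} (h : Finset.univ.val.map f = Finset.univ.val.map g) :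
    (∏ i : Fin n, (X - C ((f i : 𝕂)))) = ∏ i : Fin n, (X - C ((g i : 𝕂))) := by
  have hf : ∀ (u : Fin n → ℝ), (∏ i : Fin n, (X - C ((u i : 𝕂))))
      = ((Finset.univ.val.map u).map (fun a : ℝ => X - C ((a : 𝕂)))).prod := by
    intro u
    rw [Multiset.map_map]
    rfl
  rw [hf, hf, h]

/-- charpoly of the inverse of an invertible Hermitian matrix. -/
lemma charpoly_inv {S : Matrix (Fin n) (Fin n) 𝕂} (hS : S.IsHermitian) (hdet : IsUnit S.det) :
    S⁻¹.charpoly = ∏ i : Fin n, (X - C (((hS.eigenvalues i)⁻¹ : ℝ) : 𝕂)) := by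
  have hU := hS.spectral_theorem
  set U := (hS.eigenvectorUnitary : Matrix (Fin n) (Fin n) 𝕂) with hUdef
  have h1 : U * star U = 1 := (Matrix.mem_unitaryGroup_iff).mp hS.eigenvectorUnitary.2
  have h2 : star U * U = 1 := (Matrix.mem_unitaryGroup_iff').mp hS.eigenvectorUnitary.2
  have hSinv : S⁻¹ = U * Matrix.diagonal (fun i => ((hS.eigenvalues i : 𝕂))⁻¹) * star U := by
    apply Matrix.inv_eq_right_inv
    calc S * (U * Matrix.diagonal (fun i => ((hS.eigenvalues i : 𝕂))⁻¹) * star U)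
        = (U * Matrix.diagonal (RCLike.ofReal ∘ hS.eigenvalues) * star U)
          * (U * Matrix.diagonal (fun i => ((hS.eigenvalues i : 𝕂))⁻¹) * star U) := by exact congrArg (· * _) hU
      _ = U * (Matrix.diagonal (RCLike.ofReal ∘ hS.eigenvalues)
            * Matrix.diagonal (fun i => ((hS.eigenvalues i : 𝕂))⁻¹)) * star U := by
          rw [mul_assoc, mul_assoc, mul_assoc, ← mul_assoc (star U), h2, one_mul, ← mul_assoc,
            ← mul_assoc, mul_assoc U]
      _ = 1 := by
          rw [Matrix.diagonal_mul_diagonal]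
          have hz : ∀ i, hS.eigenvalues i ≠ 0 := by
            intro i hzero
            have := hS.det_eq_prod_eigenvalues
            rw [Finset.prod_eq_zero (Finset.mem_univ i) (by rw [hzero]; simp)] at this
            exact hdet.ne_zero this
          have : (fun i => (RCLike.ofReal ∘ hS.eigenvalues) i
              * ((hS.eigenvalues i : 𝕂))⁻¹) = fun _ => 1 := by
            funext i
            simp only [Function.comp_apply]
            rw [mul_inv_cancel₀ (by exact_mod_cast hz i)]
          rw [this, Matrix.diagonal_one, mul_one, h1]
  rw [hSinv, charpoly_conj_inv h1 h2]
  have : (fun i => ((hS.eigenvalues i : 𝕂))⁻¹) = fun i => (((hS.eigenvalues i)⁻¹ : ℝ) : 𝕂) := by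
    funext i; rw [RCLike.ofReal_inv]
  rw [this]
  exact charpoly_diagonal_real _

lemma count_ge {μ ev : Fin n → ℝ} (hms : Finset.univ.val.map μ = Finset.univ.val.map ev)
    (hμ : Antitone μ) (k : Fin n) :
    (k : ℕ) + 1 ≤ (Finset.univ.filter (fun i => μ k ≤ ev i)).card := by
  classical
  have h1 : (Finset.univ.filter (fun i => μ k ≤ ev i)).card
      = Multiset.countP (fun x => μ k ≤ x) (Finset.univ.val.map ev) := by
    rw [Multiset.countP_map]
    rfl
  rw [h1, ← hms, Multiset.countP_map]
  rw [← Finset.filter_val, ← Finset.card_def]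
  have hsub : Finset.Iic k ⊆ Finset.univ.filter (fun i => μ k ≤ μ i) := by
    intro i hi
    simp only [Finset.mem_Iic] at hi
    simp only [Finset.mem_filter, Finset.mem_univ, true_and]
    exact hμ hi
  calc (k : ℕ) + 1 = (Finset.Iic k).card := (Fin.card_Iic k).symm
    _ ≤ _ := Finset.card_le_card hsub

lemma count_le {μ ev : Fin n → ℝ} (hms : Finset.univ.val.map μ = Finset.univ.val.map ev)
    (hμ : Antitone μ) (k : Fin n) :
    n ≤ (Finset.univ.filter (fun i => ev i ≤ μ k)).card + (k : ℕ) := by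
  classical
  have h1 : (Finset.univ.filter (fun i => ev i ≤ μ k)).card
      = Multiset.countP (fun x => x ≤ μ k) (Finset.univ.val.map ev) := by
    rw [Multiset.countP_map]
    rfl
  rw [h1, ← hms, Multiset.countP_map]
  rw [← Finset.filter_val, ← Finset.card_def]
  have hsub : Finset.Ici k ⊆ Finset.univ.filter (fun i => μ i ≤ μ k) := by
    intro i hi
    simp only [Finset.mem_Ici] at hi
    simp only [Finset.mem_filter, Finset.mem_univ, true_and]
    exact hμ hi
  have := Finset.card_le_card hsub
  rw [Fin.card_Ici] at this
  have := k.isLt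
  omega

section Rayleigh

variable {M : Matrix (Fin n) (Fin n) 𝕂} (hM : M.IsHermitian)

lemma toEuclideanLin_eigenvector (i : Fin n) :
    Matrix.toEuclideanLin M (hM.eigenvectorBasis i) = hM.eigenvalues i • hM.eigenvectorBasis i := by
  apply (WithLp.equiv 2 (Fin n → 𝕂)).injective
  have := hM.mulVec_eigenvectorBasis i
  simpa [Matrix.toEuclideanLin_apply] using this

lemma repr_toEuclideanLin (x : EuclideanSpace 𝕂 (Fin n)) (i : Fin n) :
    hM.eigenvectorBasis.repr (Matrix.toEuclideanLin M x) i
      = (hM.eigenvalues i : 𝕂) * hM.eigenvectorBasis.repr x i := by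
  have hsym : (Matrix.toEuclideanLin M).IsSymmetric :=
    (Matrix.isHermitian_iff_isSymmetric).mp hM
  rw [OrthonormalBasis.repr_apply_apply, OrthonormalBasis.repr_apply_apply,
    ← hsym (hM.eigenvectorBasis i) x, toEuclideanLin_eigenvector hM i,
    RCLike.real_smul_eq_coe_smul (K := 𝕂), inner_smul_left, RCLike.conj_ofReal]

lemma qform_eq (x : EuclideanSpace 𝕂 (Fin n)) :
    RCLike.re (inner 𝕂 x (Matrix.toEuclideanLin M x) : 𝕂)
      = ∑ i : Fin n, hM.eigenvalues i * ‖hM.eigenvectorBasis.repr x i‖^2 := by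
  have h1 : (inner 𝕂 x (Matrix.toEuclideanLin M x) : 𝕂)
      = ∑ i : Fin n, ((hM.eigenvalues i * ‖hM.eigenvectorBasis.repr x i‖^2 : ℝ) : 𝕂) := by
    calc (inner 𝕂 x (Matrix.toEuclideanLin M x) : 𝕂)
        = (inner 𝕂 (hM.eigenvectorBasis.repr x)
            (hM.eigenvectorBasis.repr (Matrix.toEuclideanLin M x)) : 𝕂) :=
          (hM.eigenvectorBasis.repr.inner_map_map x _).symm
      _ = ∑ i : Fin n, (starRingEnd 𝕂) (hM.eigenvectorBasis.repr x i)
            * hM.eigenvectorBasis.repr (Matrix.toEuclideanLin M x) i := by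
          rw [PiLp.inner_apply]
          simp only [RCLike.inner_apply, mul_comm]
      _ = ∑ i : Fin n, ((hM.eigenvalues i * ‖hM.eigenvectorBasis.repr x i‖^2 : ℝ) : 𝕂) := by
          apply Finset.sum_congr rfl
          intro i _
          rw [repr_toEuclideanLin hM x i, mul_comm ((hM.eigenvalues i : 𝕂)) _, ← mul_assoc,
            RCLike.conj_mul]
          push_cast
          ring
  rw [h1, ← RCLike.ofReal_sum, RCLike.ofReal_re]

lemma norm_sq_eq_sum_repr (x : EuclideanSpace 𝕂 (Fin n)) :
    ‖x‖^2 = ∑ i : Fin n, ‖hM.eigenvectorBasis.repr x i‖^2 := by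
  rw [← hM.eigenvectorBasis.repr.norm_map x, EuclideanSpace.norm_eq,
    Real.sq_sqrt (Finset.sum_nonneg fun i _ => sq_nonneg _)]

end Rayleigh

section Span

variable {M : Matrix (Fin n) (Fin n) 𝕂} (hM : M.IsHermitian)

lemma repr_eq_zero_of_mem_span {s : Finset (Fin n)} {x : EuclideanSpace 𝕂 (Fin n)}
    (hx : x ∈ Submodule.span 𝕂 (⇑hM.eigenvectorBasis '' ↑s)) {j : Fin n} (hj : j ∉ s) :
    hM.eigenvectorBasis.repr x j = 0 := by
  have hx' : x ∈ Submodule.span 𝕂 (⇑hM.eigenvectorBasis.toBasis '' ↑s) := by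
    rwa [OrthonormalBasis.coe_toBasis]
  have hsupp := hM.eigenvectorBasis.toBasis.mem_span_image.mp hx'
  have : j ∉ (hM.eigenvectorBasis.toBasis.repr x).support := fun hmem => hj (hsupp hmem)
  have h0 : hM.eigenvectorBasis.toBasis.repr x j = 0 := Finsupp.notMem_support_iff.mp this
  rwa [OrthonormalBasis.coe_toBasis_repr_apply] at h0

lemma finrank_span_eigenvectors (s : Finset (Fin n)) :
    Module.finrank 𝕂 (Submodule.span 𝕂 (⇑hM.eigenvectorBasis '' ↑s)) = s.card := by
  classical
  have hinj : Function.Injective ⇑hM.eigenvectorBasis := by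
    intro a b hab
    apply hM.eigenvectorBasis.toBasis.injective
    exact hab
  have himg : ⇑hM.eigenvectorBasis '' ↑s = ↑(s.image ⇑hM.eigenvectorBasis) := by
    rw [Finset.coe_image]
  set t : Finset (EuclideanSpace 𝕂 (Fin n)) := s.image ⇑hM.eigenvectorBasis with ht
  have hrange : LinearIndepOn 𝕂 id (Set.range ⇑hM.eigenvectorBasis) := by
    have h2 := hM.eigenvectorBasis.toBasis.linearIndependent
    rw [← OrthonormalBasis.coe_toBasis hM.eigenvectorBasis]
    exact (linearIndepOn_id_range_iff h2.injective).mpr h2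
  have hsub : (t : Set (EuclideanSpace 𝕂 (Fin n))) ⊆ Set.range ⇑hM.eigenvectorBasis := by
    rw [ht, ← himg]
    exact Set.image_subset_range _ _
  have hli := hrange.mono hsub
  rw [himg, finrank_span_finset_eq_card hli, ht]
  exact Finset.card_image_of_injective _ hinj

lemma rayleigh_ge {s : Finset (Fin n)} {c : ℝ} (h : ∀ i ∈ s, c ≤ hM.eigenvalues i)
    {x : EuclideanSpace 𝕂 (Fin n)}
    (hx : x ∈ Submodule.span 𝕂 (⇑hM.eigenvectorBasis '' ↑s)) :
    c * ‖x‖^2 ≤ RCLike.re (inner 𝕂 x (Matrix.toEuclideanLin M x) : 𝕂) := by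
  rw [qform_eq hM, norm_sq_eq_sum_repr hM, Finset.mul_sum]
  apply Finset.sum_le_sum
  intro i _
  by_cases hi : i ∈ s
  · exact mul_le_mul_of_nonneg_right (h i hi) (sq_nonneg _)
  · rw [repr_eq_zero_of_mem_span hM hx hi]
    simp

lemma rayleigh_le {s : Finset (Fin n)} {c : ℝ} (h : ∀ i ∈ s, hM.eigenvalues i ≤ c)
    {x : EuclideanSpace 𝕂 (Fin n)}
    (hx : x ∈ Submodule.span 𝕂 (⇑hM.eigenvectorBasis '' ↑s)) :
    RCLike.re (inner 𝕂 x (Matrix.toEuclideanLin M x) : 𝕂) ≤ c * ‖x‖^2 := by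
  rw [qform_eq hM, norm_sq_eq_sum_repr hM, Finset.mul_sum]
  apply Finset.sum_le_sum
  intro i _
  by_cases hi : i ∈ s
  · exact mul_le_mul_of_nonneg_right (h i hi) (sq_nonneg _)
  · rw [repr_eq_zero_of_mem_span hM hx hi]
    simp

end Span

lemma sq_le_sq_of_pos {a b : ℝ} (ha : 0 < a) (hb : 0 < b) (h : a^2 ≤ b^2) : a ≤ b := by
  nlinarith

/-- Core eigenvalue comparison lemma. -/
lemma core_compare {M N : Matrix (Fin n) (Fin n) 𝕂} (hM : M.IsHermitian) (hN : N.IsHermitian)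
    {μ ν : Fin n → ℝ} (hμa : Antitone μ) (hνa : Antitone ν)
    (hμ : M.charpoly = ∏ i : Fin n, (X - C ((μ i : 𝕂))))
    (hν : N.charpoly = ∏ i : Fin n, (X - C ((ν i : 𝕂))))
    (r : ℕ) (K : Submodule 𝕂 (EuclideanSpace 𝕂 (Fin n))) (hK : n ≤ Module.finrank 𝕂 K + r)
    (hq : ∀ x ∈ K, RCLike.re (inner 𝕂 x (Matrix.toEuclideanLin N x) : 𝕂)
      ≤ RCLike.re (inner 𝕂 x (Matrix.toEuclideanLin M x) : 𝕂))
    (i j : Fin n) (hij : (j : ℕ) + r ≤ (i : ℕ)) : ν i ≤ μ j := by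
  classical
  have hmsM := ms_eq_of_charpoly hM hμ
  have hmsN := ms_eq_of_charpoly hN hν
  set sU : Finset (Fin n) := Finset.univ.filter (fun k => ν i ≤ hN.eigenvalues k) with hsU
  set sV : Finset (Fin n) := Finset.univ.filter (fun k => hM.eigenvalues k ≤ μ j) with hsV
  set U := Submodule.span 𝕂 (⇑hN.eigenvectorBasis '' ↑sU) with hU
  set V := Submodule.span 𝕂 (⇑hM.eigenvectorBasis '' ↑sV) with hV
  have hcardU : (i : ℕ) + 1 ≤ sU.card := count_ge hmsN hνa i
  have hcardV : n ≤ sV.card + (j : ℕ) := count_le hmsM hμa j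
  have hrU : Module.finrank 𝕂 U = sU.card := finrank_span_eigenvectors hN sU
  have hrV : Module.finrank 𝕂 V = sV.card := finrank_span_eigenvectors hM sV
  -- dimension counting
  have hdim : ∀ A B : Submodule 𝕂 (EuclideanSpace 𝕂 (Fin n)),
      Module.finrank 𝕂 A + Module.finrank 𝕂 B ≤ Module.finrank 𝕂 (A ⊓ B : Submodule 𝕂 _) + n := by
    intro A B
    have h1 := Submodule.finrank_sup_add_finrank_inf_eq A B
    have h2 : Module.finrank 𝕂 (A ⊔ B : Submodule 𝕂 _) ≤ n := by
      have := Submodule.finrank_le (A ⊔ B)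
      rwa [finrank_euclideanSpace_fin] at this
    omega
  have h1 := hdim V K
  have h2 := hdim U (V ⊓ K)
  have hpos : 0 < Module.finrank 𝕂 (U ⊓ (V ⊓ K) : Submodule 𝕂 _) := by
    have hi := i.isLt
    omega
  have hne : (U ⊓ (V ⊓ K) : Submodule 𝕂 _) ≠ ⊥ := by
    intro hbot
    rw [hbot, finrank_bot] at hpos
    exact lt_irrefl _ hpos
  obtain ⟨x, hx, hx0⟩ := Submodule.exists_mem_ne_zero_of_ne_bot hne
  have hxU : x ∈ U := hx.1
  have hxV : x ∈ V := hx.2.1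
  have hxK : x ∈ K := hx.2.2
  have hb1 : ν i * ‖x‖^2 ≤ RCLike.re (inner 𝕂 x (Matrix.toEuclideanLin N x) : 𝕂) := by
    apply rayleigh_ge hN _ hxU
    intro k hk
    rw [hsU] at hk
    exact (Finset.mem_filter.mp hk).2
  have hb2 : RCLike.re (inner 𝕂 x (Matrix.toEuclideanLin M x) : 𝕂) ≤ μ j * ‖x‖^2 := by
    apply rayleigh_le hM _ hxV
    intro k hk
    rw [hsV] at hk
    exact (Finset.mem_filter.mp hk).2
  have hb3 := hq x hxK
  have hn2 : 0 < ‖x‖^2 := pow_pos (norm_pos_iff.mpr hx0) 2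
  have := le_trans hb1 (le_trans hb3 hb2)
  exact le_of_mul_le_mul_right (by linarith [this]) hn2

open scoped ComplexOrder in
theorem dual_singular_values_interlacing' {𝕂 : Type} [RCLike 𝕂] {n m : ℕ}
    (hnm : n ≤ m)
    (Φ : Matrix (Fin n) (Fin m) 𝕂) (hΦ : Φ.rank = n)
    (σ : Fin n → ℝ) (hσ : Antitone σ ∧ (∀ i, 0 < σ i) ∧
      (Φ * Φᴴ).charpoly = ∏ i : Fin n, (X - C ((σ i : 𝕂) ^ 2)))
    (Ψ : Matrix (Fin n) (Fin m) 𝕂) (hΨ : Ψ * Φᴴ = 1)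
    (τ : Fin n → ℝ) (hτ : Antitone τ ∧ (∀ i, 0 < τ i) ∧
      (Ψ * Ψᴴ).charpoly = ∏ i : Fin n, (X - C ((τ i : 𝕂) ^ 2))) :
    (∀ i : Fin n, 1 / σ i.rev ≤ τ i) ∧
    (∀ i : Fin n, ∀ hi : m - n ≤ (i : ℕ),
      τ i ≤ 1 / σ (Fin.rev ⟨(i : ℕ) - (m - n), by have := i.isLt; omega⟩)) := by
  classical
  obtain ⟨hσa, hσp, hσc⟩ := hσ
  obtain ⟨hτa, hτp, hτc⟩ := hτ
  set S := Φ * Φᴴ with hSdef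
  have hS : S.IsHermitian := isHermitian_mul_conjTranspose_self Φ
  set T := Ψ * Ψᴴ with hTdef
  have hT : T.IsHermitian := isHermitian_mul_conjTranspose_self Ψ
  -- lists
  set s : Fin n → ℝ := fun i => σ i ^ 2 with hsdef
  set t : Fin n → ℝ := fun i => τ i ^ 2 with htdef
  set u : Fin n → ℝ := fun i => (σ i.rev ^ 2)⁻¹ with hudef
  have hsc : S.charpoly = ∏ i : Fin n, (X - C ((s i : ℝ) : 𝕂)) := by
    rw [hσc]
    exact Finset.prod_congr rfl fun i _ => by rw [hsdef]; push_cast; ring_nf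
  have htc' : T.charpoly = ∏ i : Fin n, (X - C ((t i : ℝ) : 𝕂)) := by
    rw [hτc]
    exact Finset.prod_congr rfl fun i _ => by rw [htdef]; push_cast; ring_nf
  have hta : Antitone t := fun i j hij => by
    rw [htdef]
    exact pow_le_pow_left₀ (le_of_lt (hτp j)) (hτa hij) 2
  have hua : Antitone u := by
    intro i j hij
    rw [hudef]
    have h1 : σ i.rev ≤ σ j.rev := hσa (Fin.rev_le_rev.mpr hij)
    have h2 : (0:ℝ) < σ i.rev ^ 2 := pow_pos (hσp _) 2
    exact inv_anti₀ h2 (pow_le_pow_left₀ (le_of_lt (hσp _)) h1 2)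
  -- eigenvalues of S are positive, S invertible
  have hmsS : Finset.univ.val.map s = Finset.univ.val.map hS.eigenvalues :=
    ms_eq_of_charpoly hS hsc
  have heigpos : ∀ k, 0 < hS.eigenvalues k := by
    intro k
    have hk : hS.eigenvalues k ∈ Finset.univ.val.map hS.eigenvalues :=
      Multiset.mem_map_of_mem _ (Finset.mem_univ k)
    rw [← hmsS] at hk
    obtain ⟨i, _, hi⟩ := Multiset.mem_map.mp hk
    rw [← hi, hsdef]
    exact pow_pos (hσp i) 2
  have hdet : IsUnit S.det := by
    rw [hS.det_eq_prod_eigenvalues]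
    apply isUnit_iff_ne_zero.mpr
    apply Finset.prod_ne_zero_iff.mpr
    intro i _
    exact_mod_cast ne_of_gt (heigpos i)
  have hSinvH : (S⁻¹).IsHermitian := hS.inv
  -- charpoly of S⁻¹ in terms of u
  have huc : (S⁻¹).charpoly = ∏ i : Fin n, (X - C ((u i : ℝ) : 𝕂)) := by
    rw [charpoly_inv hS hdet]
    have h1 : (∏ i : Fin n, (X - C ((u i : ℝ) : 𝕂)))
        = ∏ i : Fin n, (X - C ((((s i)⁻¹ : ℝ)) : 𝕂)) := by
      apply Fintype.prod_equiv (Fin.revPerm)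
      intro i
      rw [hudef, hsdef]
      simp [Fin.revPerm]
    rw [h1]
    apply (prod_of_ms_eq _).symm
    have : Finset.univ.val.map (fun i => (s i)⁻¹)
        = Multiset.map (fun x : ℝ => x⁻¹) (Finset.univ.val.map s) := by
      rw [Multiset.map_map]; rfl
    rw [this, hmsS, Multiset.map_map]
    rfl
  -- decomposition T = S⁻¹ + W Wᴴ
  set W := Ψ - S⁻¹ * Φ with hWdef
  have hWΦ : W * Φᴴ = 0 := by
    rw [hWdef, Matrix.sub_mul, hΨ, Matrix.mul_assoc, ← hSdef,
      Matrix.nonsing_inv_mul S hdet, sub_self]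
  set E := W * Wᴴ with hEdef
  have hEpsd : E.PosSemidef := Matrix.posSemidef_self_mul_conjTranspose W
  have hdecomp : T = S⁻¹ + E := by
    have hΨeq : Ψ = S⁻¹ * Φ + W := by rw [hWdef]; abel
    have hΦW : Φ * Wᴴ = 0 := by
      have := congrArg Matrix.conjTranspose hWΦ
      rwa [Matrix.conjTranspose_mul, Matrix.conjTranspose_conjTranspose,
        Matrix.conjTranspose_zero] at this
    rw [hTdef, hΨeq, Matrix.conjTranspose_add, Matrix.conjTranspose_mul, hSinvH.eq,
      Matrix.add_mul, Matrix.mul_add, Matrix.mul_add]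
    rw [← Matrix.mul_assoc, Matrix.mul_assoc (S⁻¹) Φ Φᴴ, ← hSdef,
      Matrix.mul_assoc (S⁻¹) S (S⁻¹), Matrix.mul_nonsing_inv S hdet, Matrix.mul_one]
    rw [Matrix.mul_assoc (S⁻¹) Φ Wᴴ, hΦW, Matrix.mul_zero, ← Matrix.mul_assoc W Φᴴ (S⁻¹),
      hWΦ, Matrix.zero_mul, add_zero, zero_add]
  -- quadratic form facts
  have hEq : ∀ x : EuclideanSpace 𝕂 (Fin n),
      0 ≤ RCLike.re (inner 𝕂 x (Matrix.toEuclideanLin E x) : 𝕂) := by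
    intro x
    have h1 : (inner 𝕂 x (Matrix.toEuclideanLin E x) : 𝕂)
        = dotProduct (star (WithLp.equiv 2 (Fin n → 𝕂) x))
            (E *ᵥ (WithLp.equiv 2 (Fin n → 𝕂) x)) := by
      rw [EuclideanSpace.inner_eq_star_dotProduct, dotProduct_comm]
      rfl
    rw [h1]
    have h2 := hEpsd.dotProduct_mulVec_nonneg (WithLp.equiv 2 (Fin n → 𝕂) x)
    exact (RCLike.nonneg_iff.mp h2).1
  have bq1 : ∀ x : EuclideanSpace 𝕂 (Fin n),
      RCLike.re (inner 𝕂 x (Matrix.toEuclideanLin (S⁻¹) x) : 𝕂)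
        ≤ RCLike.re (inner 𝕂 x (Matrix.toEuclideanLin T x) : 𝕂) := by
    intro x
    rw [hdecomp, map_add, LinearMap.add_apply, inner_add_right, map_add]
    linarith [hEq x]
  set K := LinearMap.ker (Matrix.toEuclideanLin E) with hKdef
  have bq2 : ∀ x ∈ K, RCLike.re (inner 𝕂 x (Matrix.toEuclideanLin T x) : 𝕂)
      ≤ RCLike.re (inner 𝕂 x (Matrix.toEuclideanLin (S⁻¹) x) : 𝕂) := by
    intro x hx
    rw [hdecomp, map_add, LinearMap.add_apply, inner_add_right, map_add,
      LinearMap.mem_ker.mp hx, inner_zero_right, map_zero, add_zero]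
  -- dimension of K
  have hrankW : Φ.rank + W.rank ≤ m := by
    have hsub : LinearMap.range (Φᴴ.mulVecLin) ≤ LinearMap.ker (W.mulVecLin) := by
      rintro _ ⟨y, rfl⟩
      show W *ᵥ (Φᴴ *ᵥ y) = 0
      rw [Matrix.mulVec_mulVec, hWΦ, Matrix.zero_mulVec]
    have h1 : Φᴴ.rank ≤ Module.finrank 𝕂 (LinearMap.ker (W.mulVecLin)) :=
      Submodule.finrank_mono hsub
    have h2 := LinearMap.finrank_range_add_finrank_ker (W.mulVecLin)
    rw [Matrix.rank_conjTranspose] at h1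
    have h3 : Module.finrank 𝕂 (Fin m → 𝕂) = m := by
      rw [Module.finrank_pi]
      exact Fintype.card_fin m
    rw [h3] at h2
    have h4 : W.rank = Module.finrank 𝕂 (LinearMap.range (W.mulVecLin)) := rfl
    omega
  have hK : n ≤ Module.finrank 𝕂 K + (m - n) := by
    have hEW : E.rank = W.rank := Matrix.rank_self_mul_conjTranspose W
    -- relate toEuclideanLin kernel to mulVecLin kernel
    set f : EuclideanSpace 𝕂 (Fin n) →ₗ[𝕂] (Fin n → 𝕂) :=
      (E.mulVecLin).comp (WithLp.linearEquiv 2 𝕂 (Fin n → 𝕂)).toLinearMap with hfdef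
    have hker : K = LinearMap.ker f := by
      ext x
      constructor
      · intro hx
        have : Matrix.toEuclideanLin E x = 0 := LinearMap.mem_ker.mp hx
        have h2 := congrArg (WithLp.equiv 2 (Fin n → 𝕂)) this
        exact h2
      · intro hx
        have : E *ᵥ (WithLp.equiv 2 (Fin n → 𝕂) x) = 0 := LinearMap.mem_ker.mp hx
        apply LinearMap.mem_ker.mpr
        apply (WithLp.equiv 2 (Fin n → 𝕂)).injective
        simpa using this
    have hrange : LinearMap.range f = LinearMap.range (E.mulVecLin) := by
      rw [hfdef, LinearMap.range_comp, LinearEquiv.range, Submodule.map_top]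
    have h2 := LinearMap.finrank_range_add_finrank_ker f
    rw [hrange, ← hker] at h2
    have h3 : Module.finrank 𝕂 (EuclideanSpace 𝕂 (Fin n)) = n := finrank_euclideanSpace_fin
    rw [h3] at h2
    have h4 : E.rank = Module.finrank 𝕂 (LinearMap.range (E.mulVecLin)) := rfl
    rw [hΦ] at hrankW
    omega
  -- apply core twice
  constructor
  · intro i
    have hcore := core_compare hT hSinvH hta hua htc' huc 0 ⊤
      (by rw [finrank_top, finrank_euclideanSpace_fin]; omega) (fun x _ => bq1 x) i i (by omega)
    -- hcore : u i ≤ t i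
    have h1 : (1 / σ i.rev)^2 ≤ (τ i)^2 := by
      rw [div_pow, one_pow, one_div]
      calc (σ i.rev ^ 2)⁻¹ = u i := by rw [hudef]
        _ ≤ t i := hcore
        _ = τ i ^ 2 := by rw [htdef]
    exact sq_le_sq_of_pos (one_div_pos.mpr (hσp _)) (hτp i) h1
  · intro i hi
    set j : Fin n := ⟨(i : ℕ) - (m - n), by have := i.isLt; omega⟩ with hjdef
    have hcore := core_compare hSinvH hT hua hta huc htc' (m - n) K hK bq2 i j
      (by show ((i : ℕ) - (m - n)) + (m - n) ≤ (i : ℕ); omega)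
    -- hcore : t i ≤ u j
    have h1 : (τ i)^2 ≤ (1 / σ j.rev)^2 := by
      rw [div_pow, one_pow, one_div]
      calc (τ i)^2 = t i := by rw [htdef]
        _ ≤ u j := hcore
        _ = (σ j.rev ^ 2)⁻¹ := by rw [hudef]
    exact sq_le_sq_of_pos (hτp i) (one_div_pos.mpr (hσp _)) h1

/-- Let `Φ` be a frame for `𝕂^n` with `m` vectors, `r = m − n`, and
singular values `σ_1 ≥ ⋯ ≥ σ_n > 0`. Every dual frame `Ψ` of `Φ`, with singular values
`σ^Ψ_1 ≥ ⋯ ≥ σ^Ψ_n`, satisfies the interlacing inequalities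
`σ^Ψ_i ≥ 1/σ_{n−i+1}` for `i = 1,…,r` and
`1/σ_{n−i+1} ≤ σ^Ψ_i ≤ 1/σ_{n−i+r+1}` for `i = r+1,…,n`.
Here indices are 0-based: `σ^Ψ_i` is `τ ⟨i-1⟩`, `σ_{n-i+1}` is `σ ⟨n-i⟩ = σ ⟨n-1-(i-1)⟩`. -/
theorem dual_singular_values_interlacing {𝕂 : Type} [RCLike 𝕂] {n m : ℕ}
    (hnm : n ≤ m)
    (Φ : Matrix (Fin n) (Fin m) 𝕂) (hΦ : Φ.rank = n)
    (σ : Fin n → ℝ) (hσ : HasSingularValues Φ σ)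
    (Ψ : Matrix (Fin n) (Fin m) 𝕂) (hΨ : Ψ * Φᴴ = 1)
    (τ : Fin n → ℝ) (hτ : HasSingularValues Ψ τ) :
    (∀ i : Fin n, 1 / σ ⟨n - 1 - (i : ℕ), by have := i.isLt; omega⟩ ≤ τ i) ∧
    (∀ i : Fin n, ∀ hi : m - n ≤ (i : ℕ),
      τ i ≤ 1 / σ ⟨n - 1 - (i : ℕ) + (m - n), by have := i.isLt; omega⟩) := by
  obtain ⟨h1, h2⟩ := dual_singular_values_interlacing' hnm Φ hΦ σ hσ Ψ hΨ τ hτ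
  constructor
  · intro i
    have heq : (⟨n - 1 - (i : ℕ), by have := i.isLt; omega⟩ : Fin n) = i.rev := by
      apply Fin.ext
      rw [Fin.val_rev]
      have := i.isLt
      simp only [Fin.val_mk]
      omega
    rw [heq]
    exact h1 i
  · intro i hi
    have heq : (⟨n - 1 - (i : ℕ) + (m - n), by have := i.isLt; omega⟩ : Fin n)
        = Fin.rev ⟨(i : ℕ) - (m - n), by have := i.isLt; omega⟩ := by
      apply Fin.ext
      rw [Fin.val_rev]
      have := i.isLt
      simp only [Fin.val_mk]
      omega
    rw [heq]
    exact h2 i hi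
end
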